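/- Let M be an m-outcome POVM in dimension d, let K be a valid decomposition of M, let a ≠ b be indices in Fin m, and let X be a positive semidefinite matrix such that K a b − X and K b a − X are both positive semidefinite. Define K̃ to agree with K except K̃ a a = K a a + X, K̃ b b = K b b + X, K̃ a b = K a b − X, and K̃ b a = K b a − X. Then K̃ is a valid decomposition of M, and for every unit vector φ ∈ ℂ^d the objective satisfies ∑_j ⟪φ, (K̃ j j)·φ⟫ = ∑_j ⟪φ, (K j j)·φ⟫ + 2·⟪φ, X·φ⟫ ≥ ∑_j ⟪φ, (K j j)·φ⟫. -/

import Mathlib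

open Matrix ComplexOrder

noncomputable section

/-- `K` is a valid decomposition of the POVM `M`. -/
def IsDecomp {m d : ℕ} (M : Fin m → Matrix (Fin d) (Fin d) ℂ)
    (K : Fin m → Fin m → Matrix (Fin d) (Fin d) ℂ) : Prop :=
  (∀ x j, (K x j).PosSemidef) ∧
  (∀ j, (d : ℂ) • ∑ x, K x j = (∑ x, (K x j).trace) • (1 : Matrix (Fin d) (Fin d) ℂ)) ∧
  (∀ x, ∑ j, K x j = M x)

/-- Eve's objective for the decomposition `K` and the state `φ`:
`∑_j ⟪φ, (K j j) φ⟫`. -/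
def objective {m d : ℕ} (K : Fin m → Fin m → Matrix (Fin d) (Fin d) ℂ)
    (φ : Fin d → ℂ) : ℝ :=
  ∑ j, (star φ ⬝ᵥ (K j j).mulVec φ).re

/-- **Sublemma 1**: if `X ≥ 0` with `K a b − X ≥ 0` and `K b a − X ≥ 0` for some `a ≠ b`,
then moving `X` from the off-diagonal elements to the diagonal ones yields a valid
decomposition whose objective at every unit state `φ` is larger by `2⟪φ, X φ⟫ ≥ 0`. -/
theorem improve_decomposition_X_shift
    {m d : ℕ}
    (M : Fin m → Matrix (Fin d) (Fin d) ℂ)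
    (hpsd : ∀ x, (M x).PosSemidef) (hsum : ∑ x, M x = 1)
    (K : Fin m → Fin m → Matrix (Fin d) (Fin d) ℂ) (hK : IsDecomp M K)
    (a b : Fin m) (hab : a ≠ b)
    (X : Matrix (Fin d) (Fin d) ℂ) (hX : X.PosSemidef)
    (hab' : (K a b - X).PosSemidef) (hba' : (K b a - X).PosSemidef) :
    let Kt : Fin m → Fin m → Matrix (Fin d) (Fin d) ℂ := fun x j =>
      if x = a ∧ j = a then K a a + X
      else if x = b ∧ j = b then K b b + X
      else if x = a ∧ j = b then K a b - X
      else if x = b ∧ j = a then K b a - X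
      else K x j
    IsDecomp M Kt ∧
      ∀ φ : Fin d → ℂ, star φ ⬝ᵥ φ = 1 →
        objective Kt φ = objective K φ + 2 * (star φ ⬝ᵥ X.mulVec φ).re ∧
        objective K φ ≤ objective Kt φ := by
  intro Kt
  set D : Fin m → Fin m → Matrix (Fin d) (Fin d) ℂ := fun x j =>
    if x = a ∧ j = a then X
    else if x = b ∧ j = b then X
    else if x = a ∧ j = b then -X
    else if x = b ∧ j = a then -X
    else 0 with hD
  have hKt : ∀ x j, Kt x j = K x j + D x j := by
    intro x j
    simp only [Kt, hD]
    split_ifs with h1 h2 h3 h4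
    · obtain ⟨rfl, rfl⟩ := h1; rfl
    · obtain ⟨rfl, rfl⟩ := h2; rfl
    · obtain ⟨rfl, rfl⟩ := h3; rw [sub_eq_add_neg]
    · obtain ⟨rfl, rfl⟩ := h4; rw [sub_eq_add_neg]
    · rw [add_zero]
  have hDout : ∀ x j : Fin m, x ≠ a → x ≠ b → D x j = 0 := by
    intro x j hxa hxb; simp [hD, hxa, hxb]
  have hDcol : ∀ j, ∑ x, D x j = 0 := by
    intro j
    rw [← Finset.sum_subset (Finset.subset_univ {a, b})
      (fun x _ hx => by
        simp only [Finset.mem_insert, Finset.mem_singleton, not_or] at hx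
        exact hDout x j hx.1 hx.2)]
    rw [Finset.sum_pair hab]
    by_cases hja : j = a
    · subst hja; simp [hD, hab, hab.symm]
    · by_cases hjb : j = b
      · subst hjb; simp [hD, hab, hab.symm]
      · simp [hD, hja, hjb]
  have hDrow : ∀ x, ∑ j, D x j = 0 := by
    intro x
    rw [← Finset.sum_subset (Finset.subset_univ {a, b})
      (fun j _ hj => by
        simp only [Finset.mem_insert, Finset.mem_singleton, not_or] at hj
        by_cases hxa : x = a
        · subst hxa; simp [hD, hj.1, hj.2]
        · by_cases hxb : x = b
          · subst hxb; simp [hD, hj.1, hj.2]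
          · exact hDout x j hxa hxb)]
    rw [Finset.sum_pair hab]
    by_cases hxa : x = a
    · subst hxa; simp [hD, hab, hab.symm]
    · by_cases hxb : x = b
      · subst hxb; simp [hD, hab, hab.symm]
      · simp [hD, hxa, hxb]
  obtain ⟨hK1, hK2, hK3⟩ := hK
  refine ⟨⟨?_, ?_, ?_⟩, ?_⟩
  · intro x j
    simp only [Kt]
    split_ifs
    · exact (hK1 a a).add hX
    · exact (hK1 b b).add hX
    · exact hab'
    · exact hba'
    · exact hK1 x j
  · intro j
    have e1 : ∑ x, Kt x j = ∑ x, K x j := by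
      simp only [hKt]; rw [Finset.sum_add_distrib, hDcol, add_zero]
    have hDt : ∑ x, (D x j).trace = 0 := by
      rw [← Matrix.trace_sum, hDcol, Matrix.trace_zero]
    have e2 : ∑ x, (Kt x j).trace = ∑ x, (K x j).trace := by
      simp only [hKt, Matrix.trace_add]
      rw [Finset.sum_add_distrib, hDt, add_zero]
    rw [e1, e2]; exact hK2 j
  · intro x
    have e1 : ∑ j, Kt x j = ∑ j, K x j := by
      simp only [hKt]; rw [Finset.sum_add_distrib, hDrow, add_zero]
    rw [e1]; exact hK3 x
  · intro φ _
    have hdd : ∀ j, (Kt j j) = K j j + D j j := fun j => hKt j j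
    have hobj : objective Kt φ = objective K φ + 2 * (star φ ⬝ᵥ X.mulVec φ).re := by
      unfold objective
      simp only [hdd, Matrix.add_mulVec, dotProduct_add, Complex.add_re]
      rw [Finset.sum_add_distrib]
      congr 1
      rw [← Finset.sum_subset (Finset.subset_univ {a, b})
        (fun j _ hj => by
          simp only [Finset.mem_insert, Finset.mem_singleton, not_or] at hj
          rw [hDout j j hj.1 hj.2]
          simp)]
      rw [Finset.sum_pair hab]
      have da : D a a = X := by simp [hD]
      have db : D b b = X := by simp [hD, hab.symm]
      rw [da, db]; ring
    refine ⟨hobj, ?_⟩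
    have hpos : 0 ≤ (star φ ⬝ᵥ X.mulVec φ).re := by
      have := hX.dotProduct_mulVec_nonneg φ
      rw [Complex.le_def] at this
      simpa using this.1
    rw [hobj]; linarith
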